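/- Theorem 5, second part: under the covariance assumptions on both constraints and objective, if an optimal measurement exists (some Φ ∈ 𝓜ᵐᵐ with f(Φ) ≥ f(Π') for all Π' ∈ 𝓜ᵐᵐ), then there exists an optimal measurement Π ∈ 𝓜ᵐᵐ that is G-covariant: (U g) * Π m * (U g)† = Π (g • m) for all g ∈ G and m ∈ Fin M. -/

import Mathlib

open Matrix Complex
open scoped ComplexOrder

noncomputable section

/-- A POVM with `M` outcomes: each detection operator is positive semidefinite
and they sum to the identity. -/
def IsPOVM {n : Type*} [Fintype n] [DecidableEq n] {M : ℕ}
    (P : Fin M → Matrix n n ℂ) : Prop :=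
  (∀ m, (P m).PosSemidef) ∧ ∑ m, P m = 1

/-- Membership in the feasible set `𝓜ᵐᵐ`. -/
def Feasible {n : Type*} [Fintype n] [DecidableEq n] {M J : ℕ}
    (a : Fin J → Fin M → Matrix n n ℂ) (b : Fin J → ℝ)
    (P : Fin M → Matrix n n ℂ) : Prop :=
  IsPOVM P ∧ ∀ j, ∑ m, ((a j m * P m).trace).re ≤ b j

/-- The primal objective `f(Π)`. -/
def primalObj {n : Type*} [Fintype n] {M : ℕ}
    (c : Fin M → Matrix n n ℂ) (P : Fin M → Matrix n n ℂ) : ℝ :=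
  ∑ m, ((c m * P m).trace).re

/-- The operator `z m λ = c m - ∑ j, λ j • a j m`. -/
def zOp {M J : ℕ} {n : Type*}
    (c : Fin M → Matrix n n ℂ) (a : Fin J → Fin M → Matrix n n ℂ)
    (lam : Fin J → ℝ) (m : Fin M) : Matrix n n ℂ :=
  c m - ∑ j, (lam j : ℂ) • a j m

/-- The dual objective `s(X, λ)`. -/
def dualObj {n : Type*} [Fintype n] {J : ℕ}
    (b : Fin J → ℝ) (X : Matrix n n ℂ) (lam : Fin J → ℝ) : ℝ :=
  X.trace.re + ∑ j, lam j * b j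


/-- The action `g · A = (U g) * A * (U g)†` of a group on matrices induced by a
unitary representation `U`. -/
def conjAct {n : Type*} [Fintype n] [DecidableEq n] {G : Type*} [Group G]
    (U : G →* Matrix.unitaryGroup n ℂ) (g : G) (A : Matrix n n ℂ) : Matrix n n ℂ :=
  (U g : Matrix n n ℂ) * A * star (U g : Matrix n n ℂ)

/-- The mapping `κ_g` sending `Φ` to `m ↦ (U g)⁻¹ * Φ (g • m) * (U g)`
(note `(U g)⁻¹ = (U g)† = star (U g)`). -/
def kappa {n : Type*} [Fintype n] [DecidableEq n] {G : Type*} [Group G] {M : ℕ}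
    [MulAction G (Fin M)]
    (U : G →* Matrix.unitaryGroup n ℂ) (g : G)
    (Φ : Fin M → Matrix n n ℂ) : Fin M → Matrix n n ℂ :=
  fun m => star (U g : Matrix n n ℂ) * Φ (g • m) * (U g : Matrix n n ℂ)

section Aux

variable {n : Type*} [Fintype n] [DecidableEq n] {G : Type*} [Group G] {M J : ℕ}
  [MulAction G (Fin M)] [MulAction G (Fin J)]

lemma aux_star_mul_self (U : G →* Matrix.unitaryGroup n ℂ) (g : G) :
    star (U g : Matrix n n ℂ) * (U g : Matrix n n ℂ) = 1 :=
  Matrix.UnitaryGroup.star_mul_self (U g)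

lemma aux_trace_conj (U : G →* Matrix.unitaryGroup n ℂ) (g : G) (A Y : Matrix n n ℂ) :
    (A * (star (U g : Matrix n n ℂ) * Y * (U g : Matrix n n ℂ))).trace
      = (conjAct U g A * Y).trace := by
  rw [show A * (star (U g : Matrix n n ℂ) * Y * (U g : Matrix n n ℂ))
        = (A * star (U g : Matrix n n ℂ) * Y) * (U g : Matrix n n ℂ) by
      simp [mul_assoc]]
  rw [Matrix.trace_mul_comm, conjAct]
  simp [mul_assoc]

lemma kappa_isPOVM (U : G →* Matrix.unitaryGroup n ℂ) (g : G)
    {Φ : Fin M → Matrix n n ℂ} (hΦ : IsPOVM Φ) : IsPOVM (kappa U g Φ) := by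
  constructor
  · intro m
    simpa [kappa, Matrix.star_eq_conjTranspose] using
      (hΦ.1 (g • m)).conjTranspose_mul_mul_same (U g : Matrix n n ℂ)
  · have hs : ∑ m, Φ (g • m) = 1 := by
      rw [← hΦ.2]
      exact Fintype.sum_equiv (MulAction.toPerm g) _ _ (fun m => rfl)
    calc ∑ m, kappa U g Φ m
        = star (U g : Matrix n n ℂ) * (∑ m, Φ (g • m)) * (U g : Matrix n n ℂ) := by
          rw [Finset.mul_sum, Finset.sum_mul]
          rfl
      _ = 1 := by rw [hs, mul_one, aux_star_mul_self]

lemma kappa_sum_trace (U : G →* Matrix.unitaryGroup n ℂ) (g : G)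
    (Φ : Fin M → Matrix n n ℂ) (d : Fin M → Matrix n n ℂ) :
    ∑ m, ((d m * kappa U g Φ m).trace).re
      = ∑ m, ((conjAct U g (d m) * Φ (g • m)).trace).re := by
  refine Finset.sum_congr rfl fun m _ => ?_
  rw [kappa, aux_trace_conj]

lemma kappa_feasible (U : G →* Matrix.unitaryGroup n ℂ)
    (a : Fin J → Fin M → Matrix n n ℂ) (b : Fin J → ℝ)
    (hcova : ∀ (g : G) j m, conjAct U g (a j m) = a (g • j) (g • m))
    (hcovb : ∀ (g : G) j, b j = b (g • j))
    {Φ : Fin M → Matrix n n ℂ} (hΦ : Feasible a b Φ) (g : G) :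
    Feasible a b (kappa U g Φ) := by
  refine ⟨kappa_isPOVM U g hΦ.1, fun j => ?_⟩
  rw [kappa_sum_trace]
  have : ∑ m, ((conjAct U g (a j m) * Φ (g • m)).trace).re
      = ∑ m, ((a (g • j) m * Φ m).trace).re := by
    simp only [hcova]
    exact Fintype.sum_equiv (MulAction.toPerm g) _ _ (fun m => rfl)
  rw [this, hcovb g j]
  exact hΦ.2 (g • j)

lemma kappa_primalObj (U : G →* Matrix.unitaryGroup n ℂ)
    (c : Fin M → Matrix n n ℂ)
    (hcovc : ∀ (g : G) m, conjAct U g (c m) = c (g • m))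
    (Φ : Fin M → Matrix n n ℂ) (g : G) :
    primalObj c (kappa U g Φ) = primalObj c Φ := by
  rw [primalObj, kappa_sum_trace, primalObj]
  simp only [hcovc]
  exact Fintype.sum_equiv (MulAction.toPerm g) _ _ (fun m => rfl)

lemma posSemidef_finsum {ι : Type*} (s : Finset ι) (f : ι → Matrix n n ℂ)
    (h : ∀ i ∈ s, (f i).PosSemidef) : (∑ i ∈ s, f i).PosSemidef := by
  classical
  induction s using Finset.induction_on with
  | empty => simpa using Matrix.PosSemidef.zero
  | insert _ _ hx ih =>
    rw [Finset.sum_insert hx]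
    exact (h _ (Finset.mem_insert_self _ _)).add
      (ih fun i hi => h i (Finset.mem_insert_of_mem hi))

lemma posSemidef_real_smul {A : Matrix n n ℂ} (hA : A.PosSemidef) {r : ℝ} (hr : 0 ≤ r) :
    ((r : ℂ) • A).PosSemidef := by
  constructor
  · rw [Matrix.IsHermitian, Matrix.conjTranspose_smul, hA.1.eq]
    simp
  · intro x
    exact (hA.smul (a := (r : ℂ)) (by exact_mod_cast hr)).2 x

end Aux

/-- Theorem 5, second part: if an optimal measurement exists, then a `G`-covariant
optimal measurement exists. -/
theorem exists_covariant_optimal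
    {n : Type*} [Fintype n] [DecidableEq n] [Nonempty n]
    {G : Type*} [Group G] [Fintype G]
    {M J : ℕ} [MulAction G (Fin M)] [MulAction G (Fin J)]
    (U : G →* Matrix.unitaryGroup n ℂ)
    (a : Fin J → Fin M → Matrix n n ℂ) (b : Fin J → ℝ)
    (ha : ∀ j m, (a j m).IsHermitian)
    (hne : ∃ P, Feasible a b P)
    (hcova : ∀ (g : G) j m, conjAct U g (a j m) = a (g • j) (g • m))
    (hcovb : ∀ (g : G) j, b j = b (g • j))
    (c : Fin M → Matrix n n ℂ) (hc : ∀ m, (c m).IsHermitian)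
    (hcovc : ∀ (g : G) m, conjAct U g (c m) = c (g • m))
    (hopt : ∃ Φ, Feasible a b Φ ∧ ∀ P', Feasible a b P' → primalObj c P' ≤ primalObj c Φ) :
    ∃ P : Fin M → Matrix n n ℂ, Feasible a b P ∧
      (∀ P', Feasible a b P' → primalObj c P' ≤ primalObj c P) ∧
      ∀ (g : G) (m : Fin M), conjAct U g (P m) = P (g • m) := by
  obtain ⟨Φ, hΦfeas, hΦopt⟩ := hopt
  set r : ℝ := ((Fintype.card G : ℝ))⁻¹ with hr_def
  have hcard : (Fintype.card G : ℝ) ≠ 0 := by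
    exact_mod_cast Fintype.card_ne_zero
  have hr_nonneg : 0 ≤ r := by positivity
  have hr_card : r * (Fintype.card G : ℝ) = 1 := inv_mul_cancel₀ hcard
  set P : Fin M → Matrix n n ℂ := fun m => (r : ℂ) • ∑ g : G, kappa U g Φ m with hP_def
  -- key trace identity
  have key : ∀ d : Fin M → Matrix n n ℂ,
      ∑ m, ((d m * P m).trace).re
        = r * ∑ g : G, ∑ m, ((d m * kappa U g Φ m).trace).re := by
    intro d
    have h1 : ∀ m, ((d m * P m).trace).re
        = ∑ g : G, r * ((d m * kappa U g Φ m).trace).re := by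
      intro m
      rw [hP_def]
      simp only [mul_smul_comm, Matrix.mul_sum, Matrix.trace_smul, Matrix.trace_sum,
        smul_eq_mul, Complex.re_ofReal_mul, Complex.re_sum, Finset.mul_sum]
    simp only [h1]
    rw [Finset.sum_comm]
    simp [Finset.mul_sum]
  -- P is a POVM
  have hPOVM : IsPOVM P := by
    constructor
    · intro m
      refine posSemidef_real_smul ?_ hr_nonneg
      exact posSemidef_finsum _ _ fun g _ =>
        (kappa_isPOVM U g hΦfeas.1).1 m
    · have hsum1 : ∀ g : G, ∑ m, kappa U g Φ m = 1 := fun g =>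
        (kappa_isPOVM U g hΦfeas.1).2
      calc ∑ m, P m = (r : ℂ) • ∑ g : G, ∑ m, kappa U g Φ m := by
            rw [hP_def, ← Finset.smul_sum, Finset.sum_comm]
        _ = (r : ℂ) • ((Fintype.card G) • (1 : Matrix n n ℂ)) := by
            simp only [hsum1]
            rw [Finset.sum_const, Finset.card_univ]
        _ = 1 := by
            rw [← Nat.cast_smul_eq_nsmul ℂ, smul_smul, ← Complex.ofReal_natCast,
              ← Complex.ofReal_mul, hr_card]
            simp
  -- P is feasible
  have hPfeas : Feasible a b P := by
    refine ⟨hPOVM, fun j => ?_⟩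
    rw [key (a j)]
    have hb : ∑ g : G, ∑ m, ((a j m * kappa U g Φ m).trace).re
        ≤ ∑ _g : G, b j := by
      refine Finset.sum_le_sum fun g _ => ?_
      exact (kappa_feasible U a b hcova hcovb hΦfeas g).2 j
    calc r * ∑ g : G, ∑ m, ((a j m * kappa U g Φ m).trace).re
        ≤ r * ∑ _g : G, b j := by
          exact mul_le_mul_of_nonneg_left hb hr_nonneg
      _ = b j := by
          rw [Finset.sum_const, Finset.card_univ, nsmul_eq_mul, ← mul_assoc, hr_card, one_mul]
  -- objective of P equals that of Φ
  have hPobj : primalObj c P = primalObj c Φ := by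
    rw [primalObj, key c]
    have hg : ∀ g : G, ∑ m, ((c m * kappa U g Φ m).trace).re = primalObj c Φ :=
      fun g => kappa_primalObj U c hcovc Φ g
    rw [Finset.sum_congr rfl fun g _ => hg g, Finset.sum_const, Finset.card_univ,
      nsmul_eq_mul, ← mul_assoc, hr_card, one_mul]
  refine ⟨P, hPfeas, fun P' hP' => hPobj ▸ hΦopt P' hP', ?_⟩
  -- covariance
  intro h m
  have conj_kappa : ∀ g : G,
      (U h : Matrix n n ℂ) * kappa U g Φ m * star (U h : Matrix n n ℂ)
        = kappa U (g * h⁻¹) Φ (h • m) := by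
    intro g
    have e1 : ((U (g * h⁻¹) : Matrix n n ℂ)) =
        (U g : Matrix n n ℂ) * star (U h : Matrix n n ℂ) := by
      rw [_root_.map_mul, _root_.map_inv]; rfl
    rw [kappa, kappa, e1, Matrix.star_mul, star_star, smul_smul, inv_mul_cancel_right]
    simp [mul_assoc]
  calc conjAct U h (P m)
      = (r : ℂ) • ∑ g : G, (U h : Matrix n n ℂ) * kappa U g Φ m * star (U h : Matrix n n ℂ) := by
        rw [hP_def, conjAct]
        simp [Finset.mul_sum, Finset.sum_mul, mul_smul_comm, Matrix.smul_mul]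
    _ = (r : ℂ) • ∑ g : G, kappa U (g * h⁻¹) Φ (h • m) := by
        simp only [conj_kappa]
    _ = P (h • m) := by
        rw [hP_def]
        congr 1
        exact Fintype.sum_equiv (Equiv.mulRight h⁻¹) _ _ (fun g => rfl)
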